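/- arXiv:1311.7292 — 3 statements merged into one kernel-verified Lean document; each statement's English description precedes it below -/
import Mathlib

section
/- Let V be a real normed vector space and let γ, δ : [0,1] → V be continuously differentiable paths with γ(1) = δ(0), F(γ) > 0 and F(δ) > 0. Then the norm of the energy-minimizing concatenation satisfies F(c_min(γ,δ)) = F(γ) + F(δ), i.e. (∫₀¹ ‖(c_min(γ,δ))'(t)‖² dt)^{1/2} = F(γ) + F(δ), where the derivative of c_min(γ,δ) is defined except at the single break time. -/
open Set MeasureTheory intervalIntegral

variable {V : Type*} [NormedAddCommGroup V] [NormedSpace ℝ V]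

/-- The energy `E(γ) = ∫₀¹ ‖γ'(t)‖² dt` of a path `γ : [0,1] → V`, where the derivative
is the (almost everywhere defined) derivative within `[0,1]`. -/
noncomputable def pathEnergy (γ : ℝ → V) : ℝ :=
  ∫ t in (0 : ℝ)..1, ‖derivWithin γ (Set.Icc (0 : ℝ) 1) t‖ ^ 2

/-- The `L²`-norm `F(γ) = E(γ)^{1/2}` of a path `γ : [0,1] → V`. -/
noncomputable def pathNorm (γ : ℝ → V) : ℝ :=
  Real.sqrt (pathEnergy γ)

/-- The concatenation at time `s` of two paths `γ, δ : [0,1] → V`: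
`c_s(γ,δ)(t) = γ(t/s)` for `0 ≤ t ≤ s` and `c_s(γ,δ)(t) = δ((t−s)/(1−s))` for `s ≤ t ≤ 1`. -/
noncomputable def concatAt (s : ℝ) (γ δ : ℝ → V) : ℝ → V :=
  fun t => if t ≤ s then γ (t / s) else δ ((t - s) / (1 - s))

/-- The energy-minimizing concatenation `c_min(γ,δ) = c_{s_min}(γ,δ)` with
`s_min = F(γ)/(F(γ)+F(δ))`. -/
noncomputable def concatMin (γ δ : ℝ → V) : ℝ → V :=
  concatAt (pathNorm γ / (pathNorm γ + pathNorm δ)) γ δ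

lemma deriv_left {γ δ : ℝ → V} {s : ℝ} (hs0 : 0 < s) (hs1 : s < 1)
    (hγ : ContDiffOn ℝ 1 γ (Set.Icc 0 1)) {t : ℝ} (ht : t ∈ Set.Ioo 0 s) :
    derivWithin (concatAt s γ δ) (Set.Icc 0 1) t
      = (1/s) • derivWithin γ (Set.Icc 0 1) (t / s) := by
  have hu : t / s ∈ Set.Ioo (0:ℝ) 1 := ⟨div_pos ht.1 hs0, (div_lt_one hs0).2 ht.2⟩
  have hnhds : Set.Icc (0:ℝ) 1 ∈ nhds (t/s) := Icc_mem_nhds hu.1 hu.2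
  have hγdiff : DifferentiableAt ℝ γ (t/s) :=
    ((hγ.differentiableOn one_ne_zero) (t/s) (Set.mem_Icc_of_Ioo hu)).differentiableAt hnhds
  have hγd : HasDerivAt γ (derivWithin γ (Set.Icc 0 1) (t/s)) (t/s) := by
    rw [derivWithin_of_mem_nhds hnhds]; exact hγdiff.hasDerivAt
  have hid : HasDerivAt (fun x : ℝ => x / s) (1/s) t := by
    simpa [one_div] using (hasDerivAt_id t).div_const s
  have hcomp : HasDerivAt (fun x => γ (x / s))
      ((1/s) • derivWithin γ (Set.Icc 0 1) (t/s)) t := by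
    have := hγd.scomp t hid
    simpa [Function.comp_def] using this
  have heq : concatAt s γ δ =ᶠ[nhds t] fun x => γ (x / s) := by
    filter_upwards [Iio_mem_nhds ht.2] with x hx
    simp only [concatAt, if_pos (le_of_lt (Set.mem_Iio.mp hx))]
  have hfull : HasDerivAt (concatAt s γ δ)
      ((1/s) • derivWithin γ (Set.Icc 0 1) (t/s)) t :=
    hcomp.congr_of_eventuallyEq heq
  rw [derivWithin_of_mem_nhds (Icc_mem_nhds ht.1 (ht.2.trans hs1))]
  exact hfull.deriv

lemma deriv_right {γ δ : ℝ → V} {s : ℝ} (hs0 : 0 < s) (hs1 : s < 1)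
    (hδ : ContDiffOn ℝ 1 δ (Set.Icc 0 1)) {t : ℝ} (ht : t ∈ Set.Ioo s 1) :
    derivWithin (concatAt s γ δ) (Set.Icc 0 1) t
      = (1/(1-s)) • derivWithin δ (Set.Icc 0 1) ((t - s) / (1 - s)) := by
  have h1s : (0:ℝ) < 1 - s := by linarith
  have hu : (t - s) / (1 - s) ∈ Set.Ioo (0:ℝ) 1 :=
    ⟨div_pos (by linarith [ht.1]) h1s, (div_lt_one h1s).2 (by linarith [ht.2])⟩
  have hnhds : Set.Icc (0:ℝ) 1 ∈ nhds ((t - s)/(1-s)) := Icc_mem_nhds hu.1 hu.2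
  have hδdiff : DifferentiableAt ℝ δ ((t - s)/(1-s)) :=
    ((hδ.differentiableOn one_ne_zero) _ (Set.mem_Icc_of_Ioo hu)).differentiableAt hnhds
  have hδd : HasDerivAt δ (derivWithin δ (Set.Icc 0 1) ((t - s)/(1-s))) ((t - s)/(1-s)) := by
    rw [derivWithin_of_mem_nhds hnhds]; exact hδdiff.hasDerivAt
  have hid : HasDerivAt (fun x : ℝ => (x - s) / (1 - s)) (1/(1-s)) t := by
    simpa [one_div] using ((hasDerivAt_id t).sub_const s).div_const (1 - s)
  have hcomp : HasDerivAt (fun x => δ ((x - s) / (1 - s)))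
      ((1/(1-s)) • derivWithin δ (Set.Icc 0 1) ((t - s)/(1-s))) t := by
    have := hδd.scomp t hid
    simpa [Function.comp_def] using this
  have heq : concatAt s γ δ =ᶠ[nhds t] fun x => δ ((x - s) / (1 - s)) := by
    filter_upwards [Ioi_mem_nhds ht.1] with x hx
    simp only [concatAt, if_neg (not_le.2 (Set.mem_Ioi.mp hx))]
  have hfull : HasDerivAt (concatAt s γ δ)
      ((1/(1-s)) • derivWithin δ (Set.Icc 0 1) ((t - s)/(1-s))) t :=
    hcomp.congr_of_eventuallyEq heq
  rw [derivWithin_of_mem_nhds (Icc_mem_nhds (hs0.trans ht.1) ht.2)]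
  exact hfull.deriv

lemma energy_concat {γ δ : ℝ → V} {s : ℝ} (hs0 : 0 < s) (hs1 : s < 1)
    (hγ : ContDiffOn ℝ 1 γ (Set.Icc 0 1)) (hδ : ContDiffOn ℝ 1 δ (Set.Icc 0 1)) :
    pathEnergy (concatAt s γ δ) = pathEnergy γ / s + pathEnergy δ / (1 - s) := by
  have h1s : (0:ℝ) < 1 - s := by linarith
  set g : ℝ → V := fun u => derivWithin γ (Set.Icc 0 1) u with hg
  set h : ℝ → V := fun u => derivWithin δ (Set.Icc 0 1) u with hh
  have hgc : ContinuousOn g (Set.Icc 0 1) :=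
    hγ.continuousOn_derivWithin (uniqueDiffOn_Icc zero_lt_one) le_rfl
  have hhc : ContinuousOn h (Set.Icc 0 1) :=
    hδ.continuousOn_derivWithin (uniqueDiffOn_Icc zero_lt_one) le_rfl
  set φ : ℝ → ℝ := fun t => ‖derivWithin (concatAt s γ δ) (Set.Icc 0 1) t‖ ^ 2 with hφ
  set f1 : ℝ → ℝ := fun t => (1/s)^2 * ‖g (t / s)‖ ^ 2 with hf1
  set f2 : ℝ → ℝ := fun t => (1/(1-s))^2 * ‖h ((t - s) / (1 - s))‖ ^ 2 with hf2
  -- a.e. equalities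
  have hae_s : ∀ᵐ x : ℝ, x ≠ s := by
    have := measure_eq_zero_iff_ae_notMem.mp (Real.volume_singleton (a := s))
    simpa using this
  have hae1 : ∀ᵐ x : ℝ, x ∈ Set.uIoc (0:ℝ) s → φ x = f1 x := by
    filter_upwards [hae_s] with x hx hmem
    rw [Set.uIoc_of_le hs0.le] at hmem
    have hxo : x ∈ Set.Ioo 0 s := ⟨hmem.1, lt_of_le_of_ne hmem.2 hx⟩
    simp only [hφ, hf1, deriv_left hs0 hs1 hγ hxo, norm_smul, mul_pow]
    rw [Real.norm_eq_abs, abs_of_pos (by positivity)]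
  have hae_1 : ∀ᵐ x : ℝ, x ≠ (1:ℝ) := by
    have := measure_eq_zero_iff_ae_notMem.mp (Real.volume_singleton (a := (1:ℝ)))
    simpa using this
  have hae2 : ∀ᵐ x : ℝ, x ∈ Set.uIoc s 1 → φ x = f2 x := by
    filter_upwards [hae_1] with x hx hmem
    rw [Set.uIoc_of_le hs1.le] at hmem
    have hxo : x ∈ Set.Ioo s 1 := ⟨hmem.1, lt_of_le_of_ne hmem.2 hx⟩
    simp only [hφ, hf2, deriv_right hs0 hs1 hδ hxo, norm_smul, mul_pow]
    rw [Real.norm_eq_abs, abs_of_pos (by positivity)]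
  -- integrability
  have hint1f : IntervalIntegrable f1 volume 0 s := by
    apply ContinuousOn.intervalIntegrable
    rw [Set.uIcc_of_le hs0.le]
    apply ContinuousOn.mul continuousOn_const
    have : ContinuousOn (fun t : ℝ => g (t / s)) (Set.Icc 0 s) := by
      apply hgc.comp (continuousOn_id.div_const s)
      intro x hx
      exact ⟨div_nonneg hx.1 hs0.le, (div_le_one hs0).2 hx.2⟩
    exact (this.norm).pow 2
  have hint2f : IntervalIntegrable f2 volume s 1 := by
    apply ContinuousOn.intervalIntegrable
    rw [Set.uIcc_of_le hs1.le]
    apply ContinuousOn.mul continuousOn_const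
    have : ContinuousOn (fun t : ℝ => h ((t - s) / (1 - s))) (Set.Icc s 1) := by
      apply hhc.comp ((continuousOn_id.sub continuousOn_const).div_const (1 - s))
      intro x hx
      simp only [Pi.sub_apply, id_eq]
      exact ⟨div_nonneg (by linarith [hx.1]) h1s.le, (div_le_one h1s).2 (by linarith [hx.2])⟩
    exact (this.norm).pow 2
  have hint1 : IntervalIntegrable φ volume 0 s :=
    hint1f.congr_ae ((ae_restrict_iff' measurableSet_uIoc).2
      (by filter_upwards [hae1] with x hx hmem; exact (hx hmem).symm))
  have hint2 : IntervalIntegrable φ volume s 1 :=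
    hint2f.congr_ae ((ae_restrict_iff' measurableSet_uIoc).2
      (by filter_upwards [hae2] with x hx hmem; exact (hx hmem).symm))
  have hsplit : pathEnergy (concatAt s γ δ) = (∫ t in (0:ℝ)..s, φ t) + ∫ t in s..(1:ℝ), φ t := by
    rw [pathEnergy]
    exact (integral_add_adjacent_intervals hint1 hint2).symm
  have hI1 : (∫ t in (0:ℝ)..s, φ t) = pathEnergy γ / s := by
    rw [integral_congr_ae hae1, hf1]
    simp only [intervalIntegral.integral_const_mul]
    rw [intervalIntegral.integral_comp_div (c := s) (fun u => ‖g u‖ ^ 2) hs0.ne']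
    rw [zero_div, div_self hs0.ne']
    rw [smul_eq_mul, pathEnergy]
    field_simp
    ring
  have hI2 : (∫ t in s..(1:ℝ), φ t) = pathEnergy δ / (1 - s) := by
    rw [integral_congr_ae hae2, hf2]
    simp only [intervalIntegral.integral_const_mul]
    have : (∫ t in s..(1:ℝ), ‖h ((t - s) / (1 - s))‖ ^ 2)
        = ∫ t in (s - s)..(1 - s), ‖h (t / (1 - s))‖ ^ 2 :=
      intervalIntegral.integral_comp_sub_right (fun u => ‖h (u / (1-s))‖ ^ 2) s
    rw [this, intervalIntegral.integral_comp_div (c := 1 - s) (fun u => ‖h u‖ ^ 2) h1s.ne']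
    rw [sub_self, zero_div, div_self h1s.ne']
    rw [smul_eq_mul, pathEnergy]
    field_simp
    ring
  rw [hsplit, hI1, hI2]

/-- If `γ, δ : [0,1] → V` are continuously differentiable paths with `γ(1) = δ(0)`,
`F(γ) > 0` and `F(δ) > 0`, then the norm of the energy-minimizing concatenation satisfies
`F(c_min(γ,δ)) = F(γ) + F(δ)`. -/
theorem stmt_0 (γ δ : ℝ → V)
    (hγ : ContDiffOn ℝ 1 γ (Set.Icc 0 1)) (hδ : ContDiffOn ℝ 1 δ (Set.Icc 0 1))
    (hconc : γ 1 = δ 0) (hFγ : 0 < pathNorm γ) (hFδ : 0 < pathNorm δ) :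
    pathNorm (concatMin γ δ) = pathNorm γ + pathNorm δ := by
  set a := pathNorm γ with ha
  set b := pathNorm δ with hb
  have hab : (0:ℝ) < a + b := by linarith
  set s := a / (a + b) with hs
  have hs0 : 0 < s := div_pos hFγ hab
  have hs1 : s < 1 := (div_lt_one hab).2 (by linarith)
  have hEγ : pathEnergy γ = a ^ 2 := by
    rw [ha, pathNorm, Real.sq_sqrt]
    exact (Real.sqrt_pos.mp (by rw [← pathNorm]; exact hFγ)).le
  have hEδ : pathEnergy δ = b ^ 2 := by
    rw [hb, pathNorm, Real.sq_sqrt]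
    exact (Real.sqrt_pos.mp (by rw [← pathNorm]; exact hFδ)).le
  have h1s : 1 - s = b / (a + b) := by
    rw [hs]; field_simp; ring
  have hE : pathEnergy (concatMin γ δ) = (a + b) ^ 2 := by
    rw [concatMin, ← ha, ← hb, ← hs, energy_concat hs0 hs1 hγ hδ, hEγ, hEδ, h1s, hs]
    have ha0 : a ≠ 0 := hFγ.ne'
    have hb0 : b ≠ 0 := hFδ.ne'
    field_simp
  rw [pathNorm, hE, Real.sqrt_sq hab.le]
end

section
/- Let V be a real normed vector space and let α, β, γ : [0,1] → V be continuously differentiable paths with α(1) = β(0), β(1) = γ(0), and F(α), F(β), F(γ) > 0. Then the energy-minimizing concatenation is associative: c_min(c_min(α,β),γ)(t) = c_min(α,c_min(β,γ))(t) for every t ∈ [0,1]. (Both sides equal the path which traverses α on [0, a/(a+b+c)], β on [a/(a+b+c), (a+b)/(a+b+c)] and γ on [(a+b)/(a+b+c), 1], where a = F(α), b = F(β), c = F(γ).) -/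
variable {V : Type*} [NormedAddCommGroup V] [NormedSpace ℝ V]

section Aux
open Set MeasureTheory intervalIntegral

lemma hasDerivAt_of_contDiffOn (f : ℝ → V) (hf : ContDiffOn ℝ 1 f (Set.Icc 0 1))
    {x : ℝ} (hx : x ∈ Set.Ioo (0:ℝ) 1) :
    HasDerivAt f (derivWithin f (Set.Icc 0 1) x) x := by
  have hd := (hf.differentiableOn one_ne_zero x (Set.Ioo_subset_Icc_self hx)).hasDerivWithinAt
  exact hd.hasDerivAt (Icc_mem_nhds hx.1 hx.2)

lemma deriv_concat_left (f g : ℝ → V) (hf : ContDiffOn ℝ 1 f (Set.Icc 0 1))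
    {s t : ℝ} (hs0 : 0 < s) (hs1 : s < 1) (ht : t ∈ Set.Ioo 0 s) :
    derivWithin (concatAt s f g) (Set.Icc 0 1) t
      = s⁻¹ • derivWithin f (Set.Icc 0 1) (t / s) := by
  have hts : t / s ∈ Set.Ioo (0:ℝ) 1 := ⟨div_pos ht.1 hs0, (div_lt_one hs0).2 ht.2⟩
  have hF := hasDerivAt_of_contDiffOn f hf hts
  have h1 : HasDerivAt (fun u : ℝ => u / s) (1 / s) t := by
    simpa using (hasDerivAt_id t).div_const s
  have hcomp : HasDerivAt (fun u => f (u / s))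
      (s⁻¹ • derivWithin f (Set.Icc 0 1) (t / s)) t := by
    simpa [one_div, Function.comp_def] using hF.scomp t h1
  have heq : concatAt s f g =ᶠ[nhds t] fun u => f (u / s) := by
    filter_upwards [Iio_mem_nhds ht.2] with u hu
    simp [concatAt, le_of_lt (Set.mem_Iio.1 hu)]
  rw [derivWithin_of_mem_nhds (Icc_mem_nhds ht.1 (ht.2.trans hs1)), heq.deriv_eq]
  exact hcomp.deriv

lemma deriv_concat_right (f g : ℝ → V) (hg : ContDiffOn ℝ 1 g (Set.Icc 0 1))
    {s t : ℝ} (hs0 : 0 < s) (hs1 : s < 1) (ht : t ∈ Set.Ioo s 1) :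
    derivWithin (concatAt s f g) (Set.Icc 0 1) t
      = (1 - s)⁻¹ • derivWithin g (Set.Icc 0 1) ((t - s) / (1 - s)) := by
  have h1s : (0:ℝ) < 1 - s := by linarith
  have hts : (t - s) / (1 - s) ∈ Set.Ioo (0:ℝ) 1 :=
    ⟨div_pos (by linarith [ht.1]) h1s, (div_lt_one h1s).2 (by linarith [ht.2])⟩
  have hF := hasDerivAt_of_contDiffOn g hg hts
  have h1 : HasDerivAt (fun u : ℝ => (u - s) / (1 - s)) (1 / (1 - s)) t := by
    simpa using ((hasDerivAt_id t).sub_const s).div_const (1 - s)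
  have hcomp : HasDerivAt (fun u => g ((u - s) / (1 - s)))
      ((1 - s)⁻¹ • derivWithin g (Set.Icc 0 1) ((t - s) / (1 - s))) t := by
    simpa [one_div, Function.comp_def] using hF.scomp t h1
  have heq : concatAt s f g =ᶠ[nhds t] fun u => g ((u - s) / (1 - s)) := by
    filter_upwards [Ioi_mem_nhds ht.1] with u hu
    simp [concatAt, not_le.2 (Set.mem_Ioi.1 hu)]
  rw [derivWithin_of_mem_nhds (Icc_mem_nhds (hs0.trans ht.1) ht.2), heq.deriv_eq]
  exact hcomp.deriv

lemma pathEnergy_concatAt (f g : ℝ → V) (hf : ContDiffOn ℝ 1 f (Set.Icc 0 1))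
    (hg : ContDiffOn ℝ 1 g (Set.Icc 0 1)) {s : ℝ} (hs0 : 0 < s) (hs1 : s < 1) :
    pathEnergy (concatAt s f g) = pathEnergy f / s + pathEnergy g / (1 - s) := by
  have h1s : (0:ℝ) < 1 - s := by linarith
  have hFc : ContinuousOn (fun u => ‖derivWithin f (Set.Icc 0 1) u‖ ^ 2) (Set.Icc 0 1) :=
    ((hf.continuousOn_derivWithin (uniqueDiffOn_Icc zero_lt_one) le_rfl).norm).pow 2
  have hGc : ContinuousOn (fun u => ‖derivWithin g (Set.Icc 0 1) u‖ ^ 2) (Set.Icc 0 1) :=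
    ((hg.continuousOn_derivWithin (uniqueDiffOn_Icc zero_lt_one) le_rfl).norm).pow 2
  set φ : ℝ → ℝ := fun t => s⁻¹ ^ 2 * ‖derivWithin f (Set.Icc 0 1) (t / s)‖ ^ 2 with hφ
  set ψ : ℝ → ℝ := fun t =>
    (1 - s)⁻¹ ^ 2 * ‖derivWithin g (Set.Icc 0 1) ((t - s) / (1 - s))‖ ^ 2 with hψ
  have hφc : ContinuousOn φ (Set.Icc 0 s) := by
    apply ContinuousOn.mul continuousOn_const
    apply hFc.comp (continuousOn_id.div_const s)
    intro x hx
    simp only [id_eq]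
    exact ⟨div_nonneg hx.1 hs0.le, (div_le_one hs0).2 hx.2⟩
  have hψc : ContinuousOn ψ (Set.Icc s 1) := by
    apply ContinuousOn.mul continuousOn_const
    apply hGc.comp ((continuousOn_id.sub continuousOn_const).div_const (1 - s))
    intro x hx
    simp only [Pi.sub_apply, id_eq]
    exact ⟨div_nonneg (by linarith [hx.1]) h1s.le, (div_le_one h1s).2 (by linarith [hx.2])⟩
  have hφi : IntervalIntegrable φ volume 0 s :=
    hφc.intervalIntegrable_of_Icc hs0.le
  have hψi : IntervalIntegrable ψ volume s 1 :=
    hψc.intervalIntegrable_of_Icc hs1.le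
  have hne : ∀ c : ℝ, ∀ᵐ x : ℝ, x ≠ c := by
    intro c
    refine (MeasureTheory.ae_iff).2 ?_
    simp [Set.setOf_eq_eq_singleton]
  have heq1 : ∀ᵐ x : ℝ, x ∈ Set.uIoc (0:ℝ) s →
      φ x = ‖derivWithin (concatAt s f g) (Set.Icc 0 1) x‖ ^ 2 := by
    filter_upwards [hne s] with x hx hmem
    have hx' : x ∈ Set.Ioo 0 s := by
      rw [Set.uIoc_of_le hs0.le] at hmem
      exact ⟨hmem.1, lt_of_le_of_ne hmem.2 hx⟩
    rw [deriv_concat_left f g hf hs0 hs1 hx', norm_smul, mul_pow,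
      Real.norm_eq_abs, abs_of_pos (inv_pos.2 hs0)]
  have heq2 : ∀ᵐ x : ℝ, x ∈ Set.uIoc s 1 →
      ψ x = ‖derivWithin (concatAt s f g) (Set.Icc 0 1) x‖ ^ 2 := by
    filter_upwards [hne 1] with x hx hmem
    have hx' : x ∈ Set.Ioo s 1 := by
      rw [Set.uIoc_of_le hs1.le] at hmem
      exact ⟨hmem.1, lt_of_le_of_ne hmem.2 hx⟩
    rw [deriv_concat_right f g hg hs0 hs1 hx', norm_smul, mul_pow,
      Real.norm_eq_abs, abs_of_pos (inv_pos.2 h1s)]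
  have hi1 : IntervalIntegrable
      (fun t => ‖derivWithin (concatAt s f g) (Set.Icc 0 1) t‖ ^ 2) volume 0 s := by
    apply hφi.congr_ae
    filter_upwards [MeasureTheory.ae_restrict_mem measurableSet_uIoc,
      MeasureTheory.ae_restrict_of_ae heq1] with x h1 h2
    exact h2 h1
  have hi2 : IntervalIntegrable
      (fun t => ‖derivWithin (concatAt s f g) (Set.Icc 0 1) t‖ ^ 2) volume s 1 := by
    apply hψi.congr_ae
    filter_upwards [MeasureTheory.ae_restrict_mem measurableSet_uIoc,
      MeasureTheory.ae_restrict_of_ae heq2] with x h1 h2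
    exact h2 h1
  have key1 : (∫ t in (0:ℝ)..s, ‖derivWithin (concatAt s f g) (Set.Icc 0 1) t‖ ^ 2)
      = pathEnergy f / s := by
    rw [← intervalIntegral.integral_congr_ae heq1]
    have : (∫ t in (0:ℝ)..s, φ t)
        = s⁻¹ ^ 2 * ∫ t in (0:ℝ)..s, ‖derivWithin f (Set.Icc 0 1) (t / s)‖ ^ 2 := by
      simp [hφ, intervalIntegral.integral_const_mul]
    rw [this, intervalIntegral.integral_comp_div
      (fun u => ‖derivWithin f (Set.Icc 0 1) u‖ ^ 2) hs0.ne']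
    rw [zero_div, div_self hs0.ne']
    simp only [smul_eq_mul, pathEnergy]
    field_simp
  have key2 : (∫ t in s..(1:ℝ), ‖derivWithin (concatAt s f g) (Set.Icc 0 1) t‖ ^ 2)
      = pathEnergy g / (1 - s) := by
    rw [← intervalIntegral.integral_congr_ae heq2]
    have h1 : (∫ t in s..(1:ℝ), ψ t)
        = (1-s)⁻¹ ^ 2 * ∫ t in s..(1:ℝ),
            ‖derivWithin g (Set.Icc 0 1) ((t - s) / (1-s))‖ ^ 2 := by
      simp [hψ, intervalIntegral.integral_const_mul]
    have h2 : (∫ t in s..(1:ℝ), ‖derivWithin g (Set.Icc 0 1) ((t - s) / (1-s))‖ ^ 2)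
        = ∫ t in (0:ℝ)..(1-s), ‖derivWithin g (Set.Icc 0 1) (t / (1-s))‖ ^ 2 := by
      rw [intervalIntegral.integral_comp_sub_right
        (fun u => ‖derivWithin g (Set.Icc 0 1) (u / (1-s))‖ ^ 2) s, sub_self]
    rw [h1, h2, intervalIntegral.integral_comp_div
      (fun u => ‖derivWithin g (Set.Icc 0 1) u‖ ^ 2) h1s.ne']
    rw [zero_div, div_self h1s.ne']
    simp only [smul_eq_mul, pathEnergy]
    field_simp
  rw [pathEnergy, ← intervalIntegral.integral_add_adjacent_intervals hi1 hi2, key1, key2]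

example : True := trivial

lemma pathNorm_concatMin (f g : ℝ → V) (hf : ContDiffOn ℝ 1 f (Set.Icc 0 1))
    (hg : ContDiffOn ℝ 1 g (Set.Icc 0 1))
    (hFf : 0 < pathNorm f) (hFg : 0 < pathNorm g) :
    pathNorm (concatMin f g) = pathNorm f + pathNorm g := by
  have hEf : 0 < pathEnergy f := Real.sqrt_pos.1 hFf
  have hEg : 0 < pathEnergy g := Real.sqrt_pos.1 hFg
  have hEf' : pathNorm f ^ 2 = pathEnergy f := Real.sq_sqrt hEf.le
  have hEg' : pathNorm g ^ 2 = pathEnergy g := Real.sq_sqrt hEg.le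
  have hsum : 0 < pathNorm f + pathNorm g := by linarith
  have hs0 : 0 < pathNorm f / (pathNorm f + pathNorm g) := div_pos hFf hsum
  have hs1 : pathNorm f / (pathNorm f + pathNorm g) < 1 := by
    rw [div_lt_one hsum]; linarith
  rw [concatMin, pathNorm, pathEnergy_concatAt f g hf hg hs0 hs1]
  have key : pathEnergy f / (pathNorm f / (pathNorm f + pathNorm g))
      + pathEnergy g / (1 - pathNorm f / (pathNorm f + pathNorm g))
      = (pathNorm f + pathNorm g) ^ 2 := by
    rw [← hEf', ← hEg']
    field_simp [hFf.ne', hFg.ne']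
    ring
  rw [key, Real.sqrt_sq hsum.le]

lemma concatAt_assoc (f g h : ℝ → V) {a b c t : ℝ}
    (ha : 0 < a) (hb : 0 < b) (hc : 0 < c) :
    concatAt ((a + b) / (a + b + c)) (concatAt (a / (a + b)) f g) h t
      = concatAt (a / (a + b + c)) f (concatAt (b / (b + c)) g h) t := by
  have hab : 0 < a + b := by linarith
  have hbc : 0 < b + c := by linarith
  have hS : 0 < a + b + c := by linarith
  have e : 1 - a / (a + b + c) = (b + c) / (a + b + c) := by
    field_simp; ring
  have e2 : 1 - a / (a + b) = b / (a + b) := by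
    field_simp
    ring
  have e3 : 1 - (a + b) / (a + b + c) = c / (a + b + c) := by
    field_simp
    ring
  have e4 : 1 - b / (b + c) = c / (b + c) := by
    field_simp
    ring
  simp only [concatAt]
  by_cases h1 : t ≤ a / (a + b + c)
  · have h2 : t ≤ (a + b) / (a + b + c) := by
      apply h1.trans
      gcongr
      linarith
    rw [if_pos h2, if_pos h1]
    have h3 : t / ((a + b) / (a + b + c)) ≤ a / (a + b) := by
      rw [div_div_eq_mul_div, div_le_div_iff₀ hab hab]
      have := (le_div_iff₀ hS).1 h1
      nlinarith
    rw [if_pos h3]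
    congr 1
    field_simp
  · push_neg at h1
    have h1' : a < t * (a + b + c) := (div_lt_iff₀ hS).1 h1
    by_cases h2 : t ≤ (a + b) / (a + b + c)
    · rw [if_pos h2, if_neg (not_le.2 h1)]
      have h3 : ¬ t / ((a + b) / (a + b + c)) ≤ a / (a + b) := by
        rw [div_div_eq_mul_div, not_le, div_lt_div_iff₀ hab hab]
        nlinarith
      rw [if_neg h3]
      have h2' : t * (a + b + c) ≤ a + b := (le_div_iff₀ hS).1 h2
      have hd : a / (a + b + c) * (a + b + c) = a := div_mul_cancel₀ a hS.ne'
      have h4 : (t - a / (a + b + c)) / (1 - a / (a + b + c)) ≤ b / (b + c) := by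
        rw [e, div_div_eq_mul_div, div_le_div_iff₀ hbc hbc]
        nlinarith
      rw [if_pos h4, e2, e]
      congr 1
      rw [div_div_eq_mul_div, div_div_eq_mul_div, div_div_eq_mul_div]
      field_simp
    · push_neg at h2
      rw [if_neg (not_le.2 h2), if_neg (not_le.2 h1)]
      have h2' : a + b < t * (a + b + c) := (div_lt_iff₀ hS).1 h2
      have hd : a / (a + b + c) * (a + b + c) = a := div_mul_cancel₀ a hS.ne'
      have h4 : ¬ (t - a / (a + b + c)) / (1 - a / (a + b + c)) ≤ b / (b + c) := by
        rw [e, div_div_eq_mul_div, not_le, div_lt_div_iff₀ hbc hbc]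
        nlinarith
      rw [if_neg h4, e, e3, e4]
      congr 1
      rw [div_div_eq_mul_div, div_div_eq_mul_div]
      field_simp
      ring

end Aux

/-- If `α, β, γ : [0,1] → V` are continuously differentiable paths with `α(1) = β(0)`,
`β(1) = γ(0)` and `F(α), F(β), F(γ) > 0`, then the energy-minimizing concatenation is
associative: `c_min(c_min(α,β),γ)(t) = c_min(α,c_min(β,γ))(t)` for every `t ∈ [0,1]`. -/
theorem stmt_1 (α β γ : ℝ → V)
    (hα : ContDiffOn ℝ 1 α (Set.Icc 0 1)) (hβ : ContDiffOn ℝ 1 β (Set.Icc 0 1))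
    (hγ : ContDiffOn ℝ 1 γ (Set.Icc 0 1))
    (hαβ : α 1 = β 0) (hβγ : β 1 = γ 0)
    (hFα : 0 < pathNorm α) (hFβ : 0 < pathNorm β) (hFγ : 0 < pathNorm γ) :
    ∀ t ∈ Set.Icc (0 : ℝ) 1,
      concatMin (concatMin α β) γ t = concatMin α (concatMin β γ) t := by
  intro t ht
  have hab := pathNorm_concatMin α β hα hβ hFα hFβ
  have hbc := pathNorm_concatMin β γ hβ hγ hFβ hFγ
  simp only [concatMin] at hab hbc ⊢
  rw [hab, hbc, ← add_assoc]
  exact concatAt_assoc α β γ hFα hFβ hFγ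
end

section
/- Let n ≡ 3 (mod 4). Let A be the quotient of the free unital associative ℤ/2-algebra ⟨H,S,Y⟩ on three generators by the two-sided ideal generated by the elements HS + SH + 1, HY + YH, SY + YS, S², and H^{n+1}. Then the images in A of the monomials H^a S^ε Y^k, for 0 ≤ a ≤ n, ε ∈ {0,1}, k ≥ 0, form a basis of A as a ℤ/2-vector space. (This is the additive structure underlying the presentation of the path homology algebra ℍ_·(P_n) for n ≡ 3 (mod 4), where H, S, Y have degrees −1, 1, n respectively.) -/
/-- The free unital associative `ℤ/2`-algebra `⟨H, S, Y⟩` on three generators. -/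
abbrev FreeHSY : Type := FreeAlgebra (ZMod 2) (Fin 3)

/-- The generator `H`. -/
noncomputable def genH : FreeHSY := FreeAlgebra.ι (ZMod 2) 0
/-- The generator `S`. -/
noncomputable def genS : FreeHSY := FreeAlgebra.ι (ZMod 2) 1
/-- The generator `Y`. -/
noncomputable def genY : FreeHSY := FreeAlgebra.ι (ZMod 2) 2

/-- The relations `HS + SH + 1 = 0`, `HY + YH = 0`, `SY + YS = 0`, `S² = 0`, `H^{n+1} = 0`
(for `n ≡ 3 (mod 4)`); quotienting by this relation is quotienting by the two-sided ideal
generated by the corresponding elements. -/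
inductive pathRel (n : ℕ) : FreeHSY → FreeHSY → Prop
  | hs : pathRel n (genH * genS + genS * genH + 1) 0
  | hy : pathRel n (genH * genY + genY * genH) 0
  | sy : pathRel n (genS * genY + genY * genS) 0
  | s2 : pathRel n (genS * genS) 0
  | hpow : pathRel n (genH ^ (n + 1)) 0

/-- The quotient algebra `A = ⟨H,S,Y⟩ / (HS+SH+1, HY+YH, SY+YS, S², H^{n+1})`. -/
abbrev PathAlg (n : ℕ) : Type := RingQuot (pathRel n)

namespace PathAux

variable (n : ℕ)

abbrev Idx (n : ℕ) := Fin (n + 1) × Fin 2 × ℕ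
abbrev V (n : ℕ) := Idx n →₀ ZMod 2

noncomputable def fH (q : Idx n) : V n :=
  if h : (q.1 : ℕ) < n then Finsupp.single (⟨(q.1 : ℕ) + 1, by omega⟩, q.2) 1 else 0

noncomputable def fS (q : Idx n) : V n :=
  (1 + ((q.2.1 : ℕ) : ZMod 2)) • Finsupp.single (q.1, 1, q.2.2) 1
    + ((q.1 : ℕ) : ZMod 2) • Finsupp.single (⟨(q.1 : ℕ) - 1, by omega⟩, q.2.1, q.2.2) 1

noncomputable def fY (q : Idx n) : V n := Finsupp.single (q.1, q.2.1, q.2.2 + 1) 1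

noncomputable def opOf (f : Idx n → V n) : Module.End (ZMod 2) (V n) :=
  Finsupp.lift (V n) (ZMod 2) (Idx n) f

lemma opOf_single (f : Idx n → V n) (q : Idx n) :
    opOf n f (Finsupp.single q 1) = f q := by
  simp [opOf, Finsupp.lift_apply, Finsupp.sum_single_index]

noncomputable def opH := opOf n (fH n)
noncomputable def opS := opOf n (fS n)
noncomputable def opY := opOf n (fY n)

lemma addself (x : V n) : x + x = 0 := by
  rw [← two_smul (ZMod 2), (by decide : (2 : ZMod 2) = 0), zero_smul]

lemma addself_n (x : V n) : (2 : ℕ) • x = 0 := by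
  rw [two_nsmul]; exact addself n x

lemma addself_z (x : V n) : (2 : ℤ) • x = 0 := by
  rw [two_zsmul]; exact addself n x

lemma cast_even {a : ℕ} (h : a % 2 = 0) : ((a : ℕ) : ZMod 2) = 0 := by
  rw [← ZMod.natCast_mod a 2, h, Nat.cast_zero]

lemma cast_odd {a : ℕ} (h : a % 2 = 1) : ((a : ℕ) : ZMod 2) = 1 := by
  rw [← ZMod.natCast_mod a 2, h, Nat.cast_one]

lemma ext_single {f g : Module.End (ZMod 2) (V n)}
    (h : ∀ q, f (Finsupp.single q 1) = g (Finsupp.single q 1)) : f = g := by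
  apply Finsupp.lhom_ext
  intro q b
  have hb : (Finsupp.single q b : V n) = b • Finsupp.single q 1 := by
    rw [Finsupp.smul_single, smul_eq_mul, mul_one]
  rw [hb, map_smul, map_smul, h]

lemma relHS (hn : n % 4 = 3) : opH n * opS n + opS n * opH n + 1 = 0 := by
  apply ext_single
  rintro ⟨⟨a, ha⟩, ε, k⟩
  simp only [LinearMap.add_apply, Module.End.mul_apply, Module.End.one_apply,
    LinearMap.zero_apply, opH, opS, opOf_single, fS, fH, map_add, map_smul]
  rcases lt_or_ge a n with h | h
  · simp only [dif_pos h, dif_pos (by omega : a - 1 < n), opOf_single]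
    simp only [fS]
    rcases Nat.eq_zero_or_pos a with rfl | hp
    · fin_cases ε <;>
      · push_cast
        try simp only [cast_even (by omega : (0:ℕ) % 2 = 0)]
        norm_num
        abel_nf
        simp [addself_n, addself_z, show (2:ZMod 2) = 0 from by decide]
    · have e1 : a - 1 + 1 = a := by omega
      simp only [e1, Nat.add_sub_cancel]
      push_cast
      rcases Nat.mod_two_eq_zero_or_one a with hpar | hpar <;>
        simp only [cast_even, cast_odd, hpar] <;> fin_cases ε <;>
        · push_cast
          norm_num
          abel_nf
          simp [addself_n, addself_z, show (2:ZMod 2) = 0 from by decide]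
  · have e0 : a = n := by omega
    subst e0
    simp only [dif_neg (lt_irrefl a), dif_pos (by omega : a - 1 < a), opOf_single, map_zero,
      smul_zero, (by omega : a - 1 + 1 = a), cast_odd (by omega : a % 2 = 1), one_smul,
      zero_add, add_zero]
    exact addself _ _


lemma relHY : opH n * opY n + opY n * opH n = 0 := by
  apply ext_single
  rintro ⟨⟨a, ha⟩, ε, k⟩
  simp only [LinearMap.add_apply, Module.End.mul_apply, LinearMap.zero_apply, opH, opY,
    opOf_single, fY, fH]
  rcases lt_or_ge a n with h | h
  · simp only [dif_pos h, opOf_single, fY]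
    exact addself _ _
  · simp only [dif_neg (by omega : ¬ a < n), map_zero, add_zero]

lemma relSY : opS n * opY n + opY n * opS n = 0 := by
  apply ext_single
  rintro ⟨⟨a, ha⟩, ε, k⟩
  simp only [LinearMap.add_apply, Module.End.mul_apply, LinearMap.zero_apply, opS, opY,
    opOf_single, fY, fS, map_add, map_smul, opOf_single]
  exact addself _ _

lemma relS2 : opS n * opS n = 0 := by
  apply ext_single
  rintro ⟨⟨a, ha⟩, ε, k⟩
  simp only [Module.End.mul_apply, LinearMap.zero_apply, opS, opOf_single, fS, map_add, map_smul,
    opOf_single]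
  rcases Nat.mod_two_eq_zero_or_one a with hpar | hpar
  · simp only [cast_even hpar, Fin.val_one, Nat.cast_one,
      show (1 + 1 : ZMod 2) = 0 from by decide, zero_smul, smul_zero, add_zero, zero_add]
  · simp only [cast_odd hpar, cast_even (by omega : (a-1) % 2 = 0), Fin.val_one, Nat.cast_one,
      show (1 + 1 : ZMod 2) = 0 from by decide, zero_smul, one_smul, smul_zero, add_zero,
      zero_add]
    exact addself _ _

lemma opH_pow (m : ℕ) (b : ℕ) (hb : b < n + 1) (ε : Fin 2) (k : ℕ) :
    (opH n ^ m) (Finsupp.single (⟨b, hb⟩, ε, k) 1) =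
      if h : b + m < n + 1 then Finsupp.single (⟨b + m, h⟩, ε, k) 1 else 0 := by
  induction m generalizing b with
  | zero => simp [hb]
  | succ m ih =>
    rw [pow_succ, Module.End.mul_apply]
    show (opH n ^ m) (opOf n (fH n) _) = _
    rw [opOf_single]
    simp only [fH]
    rcases lt_or_ge b n with h | h
    · rw [dif_pos h, ih (b+1) (by omega)]
      rw [show b + 1 + m = b + (m + 1) from by omega]
    · rw [dif_neg (by omega : ¬ b < n), dif_neg (by omega : ¬ b + (m+1) < n + 1), map_zero]

lemma relHpow : opH n ^ (n + 1) = 0 := by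
  apply ext_single
  rintro ⟨⟨a, ha⟩, ε, k⟩
  rw [opH_pow, dif_neg (by omega)]
  simp


noncomputable def rep : FreeHSY →ₐ[ZMod 2] Module.End (ZMod 2) (V n) :=
  FreeAlgebra.lift (ZMod 2) ![opH n, opS n, opY n]

@[simp] lemma rep_H : rep n genH = opH n := by
  simp [rep, genH]

@[simp] lemma rep_S : rep n genS = opS n := by
  simp [rep, genS]

@[simp] lemma rep_Y : rep n genY = opY n := by
  simp [rep, genY]

lemma rep_rel (hn : n % 4 = 3) : ∀ ⦃x y : FreeHSY⦄, pathRel n x y → rep n x = rep n y := by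
  intro x y h
  cases h with
  | hs => simpa using relHS n hn
  | hy => simpa using relHY n
  | sy => simpa using relSY n
  | s2 => simpa using relS2 n
  | hpow => simpa using relHpow n

lemma opY_pow (k : ℕ) (b : Fin (n+1)) (ε : Fin 2) (m : ℕ) :
    (opY n ^ k) (Finsupp.single (b, ε, m) 1) = Finsupp.single (b, ε, m + k) 1 := by
  induction k generalizing m with
  | zero => simp
  | succ k ih =>
    rw [pow_succ, Module.End.mul_apply]
    show (opY n ^ k) (opOf n (fY n) _) = _
    rw [opOf_single]
    simp only [fY, ih]
    rw [show m + 1 + k = m + (k + 1) from by omega]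

lemma indep (hn : n % 4 = 3) :
    LinearIndependent (ZMod 2)
      (fun q : Fin (n + 1) × Fin 2 × ℕ =>
        RingQuot.mkAlgHom (ZMod 2) (pathRel n)
          (genH ^ (q.1 : ℕ) * genS ^ (q.2.1 : ℕ) * genY ^ q.2.2)) := by
  let ψ : PathAlg n →ₐ[ZMod 2] Module.End (ZMod 2) (V n) :=
    RingQuot.liftAlgHom (ZMod 2) ⟨rep n, rep_rel n hn⟩
  let e₀ : V n := Finsupp.single (⟨0, by omega⟩, 0, 0) 1
  let T : PathAlg n →ₗ[ZMod 2] V n := (LinearMap.applyₗ e₀).comp ψ.toLinearMap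
  apply LinearIndependent.of_comp T
  have key : (⇑T ∘ fun q : Fin (n + 1) × Fin 2 × ℕ =>
        RingQuot.mkAlgHom (ZMod 2) (pathRel n)
          (genH ^ (q.1 : ℕ) * genS ^ (q.2.1 : ℕ) * genY ^ q.2.2))
      = fun q : Fin (n + 1) × Fin 2 × ℕ => Finsupp.single q 1 := by
    funext q
    obtain ⟨⟨a, ha⟩, ε, k⟩ := q
    show ψ (RingQuot.mkAlgHom (ZMod 2) (pathRel n) _) e₀ = _
    rw [show ψ = RingQuot.liftAlgHom (ZMod 2) ⟨rep n, rep_rel n hn⟩ from rfl,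
      RingQuot.liftAlgHom_mkAlgHom_apply]
    rw [map_mul, map_mul, map_pow, map_pow, map_pow, rep_H, rep_S, rep_Y]
    rw [Module.End.mul_apply, Module.End.mul_apply]
    have e1 : (opY n ^ k) e₀ = Finsupp.single (⟨0, by omega⟩, 0, k) 1 := by
      show (opY n ^ k) (Finsupp.single (⟨0, by omega⟩, 0, 0) 1) = _
      rw [opY_pow]
      simp
    rw [e1]
    have e2 : (opS n ^ (ε : ℕ)) (Finsupp.single ((⟨0, by omega⟩ : Fin (n+1)), 0, k) 1)
        = Finsupp.single ((⟨0, by omega⟩ : Fin (n+1)), ε, k) 1 := by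
      fin_cases ε
      · simp
      · rw [pow_one]
        show opOf n (fS n) _ = _
        rw [opOf_single]
        simp [fS]
    rw [e2, opH_pow, dif_pos (by omega : 0 + a < n + 1)]
    simp
  rw [key]
  have := (Finsupp.basisSingleOne (R := ZMod 2) (ι := Fin (n + 1) × Fin 2 × ℕ)).linearIndependent
  rwa [Finsupp.coe_basisSingleOne] at this


noncomputable def hh : PathAlg n := RingQuot.mkAlgHom (ZMod 2) (pathRel n) genH
noncomputable def ss : PathAlg n := RingQuot.mkAlgHom (ZMod 2) (pathRel n) genS
noncomputable def yy : PathAlg n := RingQuot.mkAlgHom (ZMod 2) (pathRel n) genY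

lemma two' (x : PathAlg n) : x + x = 0 := by
  have h2 : (1 : PathAlg n) + 1 = 0 := by
    have : ((1 : ZMod 2) + 1) = 0 := by decide
    calc (1 : PathAlg n) + 1 = algebraMap (ZMod 2) (PathAlg n) (1 + 1) := by
          rw [map_add, map_one]
      _ = 0 := by rw [this, map_zero]
  calc x + x = (1 + 1) * x := by rw [add_mul, one_mul]
    _ = 0 := by rw [h2, zero_mul]

lemma char2_eq {x y : PathAlg n} (h : x + y = 0) : y = x :=
  ((eq_neg_of_add_eq_zero_left h).trans (neg_eq_of_add_eq_zero_left (two' n y))).symm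

lemma rel_hs : hh n * ss n + ss n * hh n + 1 = 0 := by
  have h := RingQuot.mkAlgHom_rel (ZMod 2) (pathRel.hs (n := n))
  simpa [hh, ss] using h

lemma ss_hh : ss n * hh n = hh n * ss n + 1 := by
  apply char2_eq
  rw [← rel_hs n]
  abel

lemma yy_hh : yy n * hh n = hh n * yy n := by
  apply char2_eq
  have h := RingQuot.mkAlgHom_rel (ZMod 2) (pathRel.hy (n := n))
  simpa [hh, yy] using h

lemma yy_ss : yy n * ss n = ss n * yy n := by
  apply char2_eq
  have h := RingQuot.mkAlgHom_rel (ZMod 2) (pathRel.sy (n := n))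
  simpa [ss, yy] using h

lemma ss_sq : ss n * ss n = 0 := by
  have h := RingQuot.mkAlgHom_rel (ZMod 2) (pathRel.s2 (n := n))
  simpa [ss] using h

lemma hh_pow : hh n ^ (n + 1) = 0 := by
  have h := RingQuot.mkAlgHom_rel (ZMod 2) (pathRel.hpow (n := n))
  simpa [hh] using h

lemma shl (a : ℕ) :
    ss n * hh n ^ a = hh n ^ a * ss n + ((a : ℕ) : ZMod 2) • hh n ^ (a - 1) := by
  induction a with
  | zero => simp
  | succ a ih =>
    rw [pow_succ, ← mul_assoc, ih, add_mul, smul_mul_assoc, mul_assoc, ss_hh n, mul_add,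
      mul_one, ← pow_succ]
    rcases Nat.eq_zero_or_pos a with rfl | hp
    · simp [mul_assoc]
    · rw [show a - 1 + 1 = a from by omega, show a + 1 - 1 = a from by omega,
        Nat.cast_add, Nat.cast_one, add_smul, one_smul, ← mul_assoc]
      abel

lemma span_top (hn : n % 4 = 3) :
    Submodule.span (ZMod 2)
      (Set.range (fun q : Fin (n + 1) × Fin 2 × ℕ =>
        RingQuot.mkAlgHom (ZMod 2) (pathRel n)
          (genH ^ (q.1 : ℕ) * genS ^ (q.2.1 : ℕ) * genY ^ q.2.2))) = ⊤ := by
  set fam := fun q : Fin (n + 1) × Fin 2 × ℕ =>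
    RingQuot.mkAlgHom (ZMod 2) (pathRel n)
      (genH ^ (q.1 : ℕ) * genS ^ (q.2.1 : ℕ) * genY ^ q.2.2) with hfamdef
  set M := Submodule.span (ZMod 2) (Set.range fam) with hM
  have hfam : ∀ (a : ℕ) (ha : a < n + 1) (ε : Fin 2) (k : ℕ),
      fam (⟨a, ha⟩, ε, k) = hh n ^ a * ss n ^ (ε : ℕ) * yy n ^ k := by
    intro a ha ε k
    simp [hfamdef, hh, ss, yy, map_mul, map_pow]
  have hmem : ∀ (a : ℕ) (ha : a < n + 1) (ε : Fin 2) (k : ℕ),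
      hh n ^ a * ss n ^ (ε : ℕ) * yy n ^ k ∈ M := by
    intro a ha ε k
    exact Submodule.subset_span ⟨(⟨a, ha⟩, ε, k), (hfam a ha ε k)⟩
  have cH : ∀ (a : ℕ) (ha : a < n + 1) (ε : Fin 2) (k : ℕ),
      hh n * (hh n ^ a * ss n ^ (ε : ℕ) * yy n ^ k) ∈ M := by
    intro a ha ε k
    rw [← mul_assoc, ← mul_assoc, ← pow_succ']
    rcases lt_or_ge a n with h | h
    · exact hmem (a + 1) (by omega) ε k
    · have : a + 1 = n + 1 := by omega
      rw [this, hh_pow, zero_mul, zero_mul]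
      exact M.zero_mem
  have cS : ∀ (a : ℕ) (ha : a < n + 1) (ε : Fin 2) (k : ℕ),
      ss n * (hh n ^ a * ss n ^ (ε : ℕ) * yy n ^ k) ∈ M := by
    intro a ha ε k
    rw [← mul_assoc, ← mul_assoc, shl n a, add_mul, add_mul, smul_mul_assoc, smul_mul_assoc]
    apply M.add_mem
    · fin_cases ε
      · simpa [mul_assoc] using hmem a ha 1 k
      · rw [pow_one, mul_assoc (hh n ^ a), ss_sq, mul_zero, zero_mul]
        exact M.zero_mem
    · exact M.smul_mem _ (hmem (a - 1) (by omega) ε k)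
  have cY : ∀ (a : ℕ) (ha : a < n + 1) (ε : Fin 2) (k : ℕ),
      yy n * (hh n ^ a * ss n ^ (ε : ℕ) * yy n ^ k) ∈ M := by
    intro a ha ε k
    have c1 : Commute (yy n) (hh n) := yy_hh n
    have c2 : Commute (yy n) (ss n) := yy_ss n
    have c3 : Commute (yy n) (hh n ^ a * ss n ^ (ε : ℕ) * yy n ^ k) :=
      ((c1.pow_right a).mul_right (c2.pow_right _)).mul_right ((Commute.refl (yy n)).pow_right k)
    rw [c3.eq, mul_assoc, ← pow_succ]
    exact hmem a ha ε (k + 1)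
  have pres : ∀ (T : PathAlg n →ₗ[ZMod 2] PathAlg n),
      (∀ q : Fin (n + 1) × Fin 2 × ℕ, T (fam q) ∈ M) → ∀ v ∈ M, T v ∈ M := by
    intro T hT v hv
    have hle : M ≤ Submodule.comap T M := by
      rw [hM, Submodule.span_le]
      rintro x ⟨q, rfl⟩
      exact hT q
    exact hle hv
  have key : ∀ z : FreeHSY, ∀ v ∈ M, RingQuot.mkAlgHom (ZMod 2) (pathRel n) z * v ∈ M := by
    intro z
    induction z using FreeAlgebra.induction with
    | grade0 r =>
      intro v hv
      rw [AlgHom.commutes, ← Algebra.smul_def]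
      exact M.smul_mem r hv
    | grade1 i =>
      intro v hv
      apply pres (LinearMap.mulLeft (ZMod 2) (RingQuot.mkAlgHom (ZMod 2) (pathRel n)
        (FreeAlgebra.ι (ZMod 2) i))) _ v hv
      intro q
      obtain ⟨⟨a, ha⟩, ε, k⟩ := q
      rw [LinearMap.mulLeft_apply, hfam a ha ε k]
      fin_cases i
      · exact cH a ha ε k
      · exact cS a ha ε k
      · exact cY a ha ε k
    | mul x y ihx ihy =>
      intro v hv
      rw [map_mul, mul_assoc]
      exact ihx _ (ihy _ hv)
    | add x y ihx ihy =>
      intro v hv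
      rw [map_add, add_mul]
      exact M.add_mem (ihx v hv) (ihy v hv)
  rw [eq_top_iff]
  rintro x -
  obtain ⟨z, rfl⟩ := RingQuot.mkAlgHom_surjective (ZMod 2) (pathRel n) x
  have h1 : (1 : PathAlg n) ∈ M := by
    simpa using hmem 0 (by omega) 0 0
  have := key z 1 h1
  rwa [mul_one] at this

end PathAux

/-- For `n ≡ 3 (mod 4)`, the images in `A` of the monomials `H^a S^ε Y^k`, for
`0 ≤ a ≤ n`, `ε ∈ {0,1}`, `k ≥ 0`, form a basis of `A` as a `ℤ/2`-vector space. -/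
theorem stmt_13 (n : ℕ) (hn : n % 4 = 3) :
    LinearIndependent (ZMod 2)
      (fun q : Fin (n + 1) × Fin 2 × ℕ =>
        RingQuot.mkAlgHom (ZMod 2) (pathRel n)
          (genH ^ (q.1 : ℕ) * genS ^ (q.2.1 : ℕ) * genY ^ q.2.2)) ∧
    Submodule.span (ZMod 2)
      (Set.range (fun q : Fin (n + 1) × Fin 2 × ℕ =>
        RingQuot.mkAlgHom (ZMod 2) (pathRel n)
          (genH ^ (q.1 : ℕ) * genS ^ (q.2.1 : ℕ) * genY ^ q.2.2))) = ⊤ := by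
  exact ⟨PathAux.indep n hn, PathAux.span_top n hn⟩
end
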